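/- Let X₁, X₂ be i.i.d. copies of a random variable X with P(X₁ ≠ X₂) > 0, let θ ∈ (0,1), and suppose X ≤_st θX₁ + (1-θ)X₂. Then E[X] is infinite (assuming X is nonnegative). -/

import Mathlib

open MeasureTheory ProbabilityTheory Set Filter
open scoped ENNReal NNReal

/-- If the "survival functions" of `f` and `g` agree a.e. on `Ioi 0`, they agree
everywhere on `Ici 0`, by right-continuity of measures of superlevel sets. -/
lemma meas_lt_eq_of_ae_eq {Ω : Type*} [MeasurableSpace Ω] (μ : Measure Ω) (f g : Ω → ℝ)
    (hae : ∀ᵐ t ∂(volume.restrict (Set.Ioi (0:ℝ))),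
      μ {ω | t < f ω} = μ {ω | t < g ω})
    {x : ℝ} (hx : 0 ≤ x) : μ {ω | x < f ω} = μ {ω | x < g ω} := by
  have hae' : ∀ᵐ t : ℝ ∂volume, t ∈ Set.Ioi (0:ℝ) →
      μ {ω | t < f ω} = μ {ω | t < g ω} :=
    (ae_restrict_iff' measurableSet_Ioi).mp hae
  rw [ae_iff] at hae'
  have hsel : ∀ n : ℕ, ∃ ε : ℝ, 0 < ε ∧ ε ≤ 1/(n+1) ∧
      μ {ω | x + ε < f ω} = μ {ω | x + ε < g ω} := by
    intro n
    by_contra h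
    push_neg at h
    have hsub : Set.Ioo x (x + 1/(n+1:ℝ)) ⊆
        {t : ℝ | ¬ (t ∈ Set.Ioi (0:ℝ) → μ {ω | t < f ω} = μ {ω | t < g ω})} := by
      intro t ht
      simp only [Set.mem_setOf_eq, Classical.not_imp]
      refine ⟨lt_of_le_of_lt hx ht.1, fun heq => ?_⟩
      have h2 := h (t - x) (by linarith [ht.1]) (by linarith [ht.2])
      apply h2
      have : x + (t - x) = t := by ring
      rw [this]; exact heq
    have h0 : volume (Set.Ioo x (x + 1/(n+1:ℝ))) = 0 := measure_mono_null hsub hae'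
    rw [Real.volume_Ioo] at h0
    have hpos : (0:ℝ) < x + 1/(n+1) - x := by
      have : (0:ℝ) < 1/(n+1) := by positivity
      linarith
    rw [ENNReal.ofReal_eq_zero] at h0
    linarith
  choose ε hε1 hε2 hε3 using hsel
  have hne : ∀ n : ℕ, (Finset.range (n+1)).Nonempty := fun n => ⟨n, by simp⟩
  set m : ℕ → ℝ := fun n => (Finset.range (n+1)).inf' (hne n) ε with hm
  have hmem : ∀ n, ∃ i ∈ Finset.range (n+1), m n = ε i := by
    intro n
    obtain ⟨i, hi, h⟩ := Finset.exists_mem_eq_inf' (hne n) ε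
    exact ⟨i, hi, h⟩
  have hmpos : ∀ n, 0 < m n := by
    intro n; obtain ⟨i, _, hi⟩ := hmem n; rw [hi]; exact hε1 i
  have hmanti : Antitone m := by
    intro a b hab
    obtain ⟨i, hi, hieq⟩ := hmem a
    have : i ∈ Finset.range (b+1) := by
      simp only [Finset.mem_range] at hi ⊢; omega
    calc m b ≤ ε i := Finset.inf'_le _ this
    _ = m a := hieq.symm
  have hmle : ∀ n, m n ≤ 1/(n+1) :=
    fun n => (Finset.inf'_le _ (by simp : n ∈ Finset.range (n+1))).trans (hε2 n)
  have hmeq : ∀ n, μ {ω | x + m n < f ω} = μ {ω | x + m n < g ω} := by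
    intro n; obtain ⟨i, _, hi⟩ := hmem n; rw [hi]; exact hε3 i
  have hmt : Tendsto m atTop (nhds 0) :=
    squeeze_zero (fun n => (hmpos n).le) hmle tendsto_one_div_add_atTop_nhds_zero_nat
  have key : ∀ h : Ω → ℝ, Monotone (fun n => {ω | x + m n < h ω}) ∧
      (⋃ n, {ω | x + m n < h ω}) = {ω | x < h ω} := by
    intro h
    constructor
    · intro a b hab ω hω
      simp only [Set.mem_setOf_eq] at hω ⊢
      have := hmanti hab
      linarith
    · ext ω
      simp only [Set.mem_iUnion, Set.mem_setOf_eq]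
      constructor
      · rintro ⟨n, hn⟩; have := hmpos n; linarith
      · intro hω
        have hev : ∀ᶠ n in atTop, m n < h ω - x :=
          hmt.eventually (gt_mem_nhds (show (0:ℝ) < h ω - x by linarith))
        obtain ⟨n, hn⟩ := hev.exists
        exact ⟨n, by linarith⟩
  have tF := tendsto_measure_iUnion_atTop (μ := μ) (key f).1
  have tG := tendsto_measure_iUnion_atTop (μ := μ) (key g).1
  rw [(key f).2] at tF
  rw [(key g).2] at tG
  have tF' : Tendsto (fun n => μ {ω | x + m n < g ω}) atTop (nhds (μ {ω | x < f ω})) := by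
    refine tF.congr fun n => ?_
    exact hmeq n
  exact tendsto_nhds_unique tF' tG

/-- If `X₁, X₂` are i.i.d. nonnegative with `P(X₁ ≠ X₂) > 0`,
`θ ∈ (0,1)`, and `X₁ ≤_st θ X₁ + (1-θ) X₂`, then `E[X₁] = ∞`. -/
theorem stmt10 {Ω : Type*} [MeasurableSpace Ω] (μ : Measure Ω) [IsProbabilityMeasure μ]
    (X₁ X₂ : Ω → ℝ) (hX₁ : Measurable X₁) (hX₂ : Measurable X₂)
    (hnn₁ : ∀ ω, 0 ≤ X₁ ω) (hnn₂ : ∀ ω, 0 ≤ X₂ ω)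
    (hindep : IndepFun X₁ X₂ μ)
    (hid : Measure.map X₁ μ = Measure.map X₂ μ)
    (hne : 0 < μ {ω | X₁ ω ≠ X₂ ω})
    (θ : ℝ) (hθ : θ ∈ Ioo (0 : ℝ) 1)
    (hdom : ∀ x : ℝ, μ {ω | x < X₁ ω} ≤ μ {ω | x < θ * X₁ ω + (1 - θ) * X₂ ω}) :
    ∫⁻ ω, ENNReal.ofReal (X₁ ω) ∂μ = ⊤ := by
  by_contra hfin
  obtain ⟨hθ0, hθ1⟩ := hθ
  set Z : Ω → ℝ := fun ω => θ * X₁ ω + (1 - θ) * X₂ ω with hZdef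
  have hZ : Measurable Z := (hX₁.const_mul θ).add (hX₂.const_mul (1 - θ))
  have hnnZ : ∀ ω, 0 ≤ Z ω := fun ω =>
    add_nonneg (mul_nonneg hθ0.le (hnn₁ ω)) (mul_nonneg (by linarith) (hnn₂ ω))
  -- E[X₂] = E[X₁] via identical distribution
  have hmapint : ∀ (φ : ℝ → ℝ≥0∞), Measurable φ →
      ∫⁻ ω, φ (X₂ ω) ∂μ = ∫⁻ ω, φ (X₁ ω) ∂μ := by
    intro φ hφ
    rw [← lintegral_map hφ hX₂, ← hid, lintegral_map hφ hX₁]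
  have hE₂ : ∫⁻ ω, ENNReal.ofReal (X₂ ω) ∂μ = ∫⁻ ω, ENNReal.ofReal (X₁ ω) ∂μ :=
    hmapint _ ENNReal.measurable_ofReal
  -- E[Z] = E[X₁]
  have hsplit : ∀ (f g : Ω → ℝ), (∀ ω, 0 ≤ f ω) → (∀ ω, 0 ≤ g ω) →
      Measurable f → Measurable g →
      ∫⁻ ω, ENNReal.ofReal (θ * f ω + (1 - θ) * g ω) ∂μ
        = ENNReal.ofReal θ * ∫⁻ ω, ENNReal.ofReal (f ω) ∂μ
          + ENNReal.ofReal (1 - θ) * ∫⁻ ω, ENNReal.ofReal (g ω) ∂μ := by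
    intro f g hf hg hfm hgm
    have heq : ∀ ω, ENNReal.ofReal (θ * f ω + (1 - θ) * g ω)
        = ENNReal.ofReal θ * ENNReal.ofReal (f ω)
          + ENNReal.ofReal (1 - θ) * ENNReal.ofReal (g ω) := by
      intro ω
      rw [ENNReal.ofReal_add (mul_nonneg hθ0.le (hf ω)) (mul_nonneg (by linarith) (hg ω)),
        ENNReal.ofReal_mul hθ0.le, ENNReal.ofReal_mul (by linarith : (0:ℝ) ≤ 1 - θ)]
    simp_rw [heq]
    rw [lintegral_add_left (hfm.ennreal_ofReal.const_mul _),
      lintegral_const_mul _ hfm.ennreal_ofReal,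
      lintegral_const_mul _ hgm.ennreal_ofReal]
  have hcoef : ENNReal.ofReal θ + ENNReal.ofReal (1 - θ) = 1 := by
    rw [← ENNReal.ofReal_add hθ0.le (by linarith)]
    norm_num
  have haffine : ∀ (a : ℝ≥0∞),
      ENNReal.ofReal θ * a + ENNReal.ofReal (1 - θ) * a = a := by
    intro a
    rw [← add_mul, hcoef, one_mul]
  have hEZ : ∫⁻ ω, ENNReal.ofReal (Z ω) ∂μ = ∫⁻ ω, ENNReal.ofReal (X₁ ω) ∂μ := by
    rw [hsplit X₁ X₂ hnn₁ hnn₂ hX₁ hX₂, hE₂, haffine]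
  -- layer cake
  have lc : ∀ (f : Ω → ℝ), (∀ ω, 0 ≤ f ω) → Measurable f →
      ∫⁻ ω, ENNReal.ofReal (f ω) ∂μ = ∫⁻ t in Ioi (0:ℝ), μ {ω | t < f ω} :=
    fun f hf hfm => lintegral_eq_lintegral_meas_lt μ (Eventually.of_forall hf) hfm.aemeasurable
  have hFanti : ∀ (f : Ω → ℝ), Antitone (fun t => μ {ω | t < f ω}) :=
    fun f a b hab => measure_mono (fun ω hω => lt_of_le_of_lt hab hω)
  -- survival functions agree a.e. on Ioi 0
  have hae : (fun t => μ {ω | t < X₁ ω}) =ᵐ[volume.restrict (Ioi (0:ℝ))]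
      (fun t => μ {ω | t < Z ω}) := by
    apply ae_eq_of_ae_le_of_lintegral_le (Eventually.of_forall fun t => hdom t)
    · rw [← lc X₁ hnn₁ hX₁]; exact hfin
    · exact ((hFanti Z).measurable).aemeasurable
    · rw [← lc Z hnnZ hZ, ← lc X₁ hnn₁ hX₁, hEZ]
  have hFG : ∀ x : ℝ, 0 ≤ x → μ {ω | x < X₁ ω} = μ {ω | x < Z ω} :=
    fun x hx => meas_lt_eq_of_ae_eq μ X₁ Z hae hx
  -- E[√Z] = E[√X₁]
  have hsqrt_lc : ∀ (f : Ω → ℝ), (∀ ω, 0 ≤ f ω) → Measurable f →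
      ∫⁻ ω, ENNReal.ofReal (Real.sqrt (f ω)) ∂μ
        = ∫⁻ t in Ioi (0:ℝ), μ {ω | t^2 < f ω} := by
    intro f hf hfm
    rw [lc _ (fun ω => Real.sqrt_nonneg _) (hfm.sqrt)]
    refine setLIntegral_congr_fun measurableSet_Ioi (fun t ht => ?_)
    congr 1
    ext ω
    simp only [Set.mem_setOf_eq]
    exact Real.lt_sqrt (le_of_lt ht)
  have hEsqrt : ∫⁻ ω, ENNReal.ofReal (Real.sqrt (Z ω)) ∂μ
      = ∫⁻ ω, ENNReal.ofReal (Real.sqrt (X₁ ω)) ∂μ := by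
    rw [hsqrt_lc Z hnnZ hZ, hsqrt_lc X₁ hnn₁ hX₁]
    refine setLIntegral_congr_fun measurableSet_Ioi (fun t ht => ?_)
    exact (hFG (t^2) (sq_nonneg t)).symm
  -- E[√X₂] = E[√X₁]
  have hEsqrt₂ : ∫⁻ ω, ENNReal.ofReal (Real.sqrt (X₂ ω)) ∂μ
      = ∫⁻ ω, ENNReal.ofReal (Real.sqrt (X₁ ω)) ∂μ :=
    hmapint _ (measurable_id'.sqrt.ennreal_ofReal)
  -- finiteness of E[√X₁]
  have hfin_sqrt : ∫⁻ ω, ENNReal.ofReal (Real.sqrt (X₁ ω)) ∂μ ≠ ⊤ := by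
    have hle : ∀ ω, ENNReal.ofReal (Real.sqrt (X₁ ω)) ≤ 1 + ENNReal.ofReal (X₁ ω) := by
      intro ω
      have h1 : Real.sqrt (X₁ ω) ≤ 1 + X₁ ω := by
        nlinarith [Real.sq_sqrt (hnn₁ ω), Real.sqrt_nonneg (X₁ ω)]
      calc ENNReal.ofReal (Real.sqrt (X₁ ω)) ≤ ENNReal.ofReal (1 + X₁ ω) :=
            ENNReal.ofReal_le_ofReal h1
      _ = ENNReal.ofReal 1 + ENNReal.ofReal (X₁ ω) := ENNReal.ofReal_add zero_le_one (hnn₁ ω)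
      _ = 1 + ENNReal.ofReal (X₁ ω) := by norm_num
    have hb : ∫⁻ ω, ENNReal.ofReal (Real.sqrt (X₁ ω)) ∂μ
        ≤ ∫⁻ ω, (1 + ENNReal.ofReal (X₁ ω)) ∂μ := lintegral_mono hle
    have hb2 : ∫⁻ ω, (1 + ENNReal.ofReal (X₁ ω)) ∂μ
        = μ Set.univ + ∫⁻ ω, ENNReal.ofReal (X₁ ω) ∂μ := by
      rw [lintegral_add_left measurable_const, lintegral_const, one_mul]
    refine ne_top_of_le_ne_top ?_ hb
    rw [hb2]
    exact ENNReal.add_ne_top.mpr ⟨(measure_ne_top μ _), hfin⟩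
  -- strict concavity of sqrt
  have hconc : StrictConcaveOn ℝ (Set.Ici (0:ℝ)) Real.sqrt := by
    have : Real.sqrt = fun x : ℝ => x ^ (1/(2:ℝ)) := funext Real.sqrt_eq_rpow
    rw [this]
    exact Real.strictConcaveOn_rpow (by norm_num) (by norm_num)
  -- comparison between comb := θ√X₁ + (1-θ)√X₂ and √Z
  set comb : Ω → ℝ := fun ω => θ * Real.sqrt (X₁ ω) + (1 - θ) * Real.sqrt (X₂ ω) with hcombdef
  have hcomb_le : ∀ ω, comb ω ≤ Real.sqrt (Z ω) := by
    intro ω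
    have h := hconc.concaveOn.2 (Set.mem_Ici.2 (hnn₁ ω)) (Set.mem_Ici.2 (hnn₂ ω))
      hθ0.le (by linarith : (0:ℝ) ≤ 1 - θ) (by ring)
    simpa [smul_eq_mul] using h
  have hcomb_int : ∫⁻ ω, ENNReal.ofReal (comb ω) ∂μ
      = ∫⁻ ω, ENNReal.ofReal (Real.sqrt (X₁ ω)) ∂μ := by
    rw [show (fun ω => ENNReal.ofReal (comb ω))
        = fun ω => ENNReal.ofReal (θ * Real.sqrt (X₁ ω) + (1 - θ) * Real.sqrt (X₂ ω)) from rfl]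
    rw [hsplit _ _ (fun ω => Real.sqrt_nonneg _) (fun ω => Real.sqrt_nonneg _)
      hX₁.sqrt hX₂.sqrt, hEsqrt₂, haffine]
  -- a.e. equality comb = √Z
  have hae2 : (fun ω => ENNReal.ofReal (comb ω)) =ᵐ[μ]
      (fun ω => ENNReal.ofReal (Real.sqrt (Z ω))) := by
    apply ae_eq_of_ae_le_of_lintegral_le
      (Eventually.of_forall fun ω => ENNReal.ofReal_le_ofReal (hcomb_le ω))
    · rw [hcomb_int]; exact hfin_sqrt
    · exact (ENNReal.measurable_ofReal.comp hZ.sqrt).aemeasurable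
    · rw [hcomb_int, hEsqrt]
  -- contradiction with strict concavity on {X₁ ≠ X₂}
  have hnull : μ {ω | X₁ ω ≠ X₂ ω} = 0 := by
    rw [Filter.EventuallyEq, ae_iff] at hae2
    refine measure_mono_null ?_ hae2
    intro ω hω
    simp only [Set.mem_setOf_eq] at hω ⊢
    have hstrict := hconc.2 (Set.mem_Ici.2 (hnn₁ ω)) (Set.mem_Ici.2 (hnn₂ ω)) hω
      hθ0 (by linarith : (0:ℝ) < 1 - θ) (by ring)
    simp only [smul_eq_mul] at hstrict
    have hcombnn : 0 ≤ comb ω := add_nonneg (mul_nonneg hθ0.le (Real.sqrt_nonneg _))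
      (mul_nonneg (by linarith) (Real.sqrt_nonneg _))
    have hlt : ENNReal.ofReal (comb ω) < ENNReal.ofReal (Real.sqrt (Z ω)) :=
      (ENNReal.ofReal_lt_ofReal_iff_of_nonneg hcombnn).2 hstrict
    exact hlt.ne
  rw [hnull] at hne
  exact lt_irrefl 0 hne
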